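/- In a median order v_1, ..., v_N of a tournament T (an ordering maximizing the number of forward edges), for every index i and every j < i, at least half of the vertices v_j, v_{j+1}, ..., v_{i-1} are in-neighbors of v_i. -/

import Mathlib

open scoped Classical

def blockCycle (N : ℕ) (j i : Fin N) (hji : (j : ℕ) < i) : Equiv.Perm (Fin N) where
  toFun k := ⟨if (k : ℕ) = i then j else if (j : ℕ) ≤ k ∧ (k : ℕ) < i then k + 1 else k,
    by have := k.isLt; have := i.isLt; have := j.isLt; split_ifs <;> omega⟩
  invFun k := ⟨if (k : ℕ) = j then i else if (j : ℕ) < k ∧ (k : ℕ) ≤ i then k - 1 else k,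
    by have := k.isLt; have := i.isLt; split_ifs <;> omega⟩
  left_inv k := by
    apply Fin.ext; dsimp only; split_ifs <;> omega
  right_inv k := by
    apply Fin.ext; dsimp only; split_ifs <;> omega

lemma blockCycle_vals (N : ℕ) (j i : Fin N) (hji : (j : ℕ) < i) (k : Fin N) :
    ((blockCycle N j i hji k : Fin N) : ℕ) =
      if (k : ℕ) = i then (j : ℕ) else if (j : ℕ) ≤ k ∧ (k : ℕ) < i then (k : ℕ) + 1
      else (k : ℕ) := rfl

theorem median_order_half_inneighbors (N : ℕ) (T : Fin N → Fin N → Prop)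
    (hirr : ∀ i, ¬ T i i)
    (htour : ∀ i j : Fin N, i ≠ j → (T i j ↔ ¬ T j i))
    (hmedian : ∀ σ : Equiv.Perm (Fin N),
      (Finset.univ.filter (fun p : Fin N × Fin N => p.1 < p.2 ∧ T (σ p.1) (σ p.2))).card ≤
      (Finset.univ.filter (fun p : Fin N × Fin N => p.1 < p.2 ∧ T p.1 p.2)).card)
    (i j : Fin N) (hji : j < i) :
    (i : ℕ) - (j : ℕ) ≤
      2 * (Finset.univ.filter (fun m : Fin N => j ≤ m ∧ m < i ∧ T m i)).card := by
  classical
  have hji' : (j : ℕ) < i := hji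
  set π := blockCycle N j i hji' with hπdef
  have hne : ∀ a b : Fin N, T a b → a ≠ b := by
    rintro a b h rfl; exact hirr a h
  -- the value lemma
  have hval : ∀ k : Fin N, (π k : ℕ) =
      if (k : ℕ) = i then (j : ℕ) else if (j : ℕ) ≤ k ∧ (k : ℕ) < i then (k : ℕ) + 1
      else (k : ℕ) := blockCycle_vals N j i hji'
  -- step 1: forward count of π.symm equals count of pairs with π-order
  set S1 : Finset (Fin N × Fin N) :=
    Finset.univ.filter (fun p => (π p.1 : ℕ) < (π p.2 : ℕ) ∧ T p.1 p.2) with hS1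
  set S2 : Finset (Fin N × Fin N) :=
    Finset.univ.filter (fun p : Fin N × Fin N => p.1 < p.2 ∧ T p.1 p.2) with hS2
  have hcard1 : S1.card ≤ S2.card := by
    have heq : S1.card =
        (Finset.univ.filter (fun p : Fin N × Fin N =>
          p.1 < p.2 ∧ T (π.symm p.1) (π.symm p.2))).card := by
      apply Finset.card_bij' (fun p _ => (π p.1, π p.2)) (fun p _ => (π.symm p.1, π.symm p.2))
      · intro p hp
        simp only [hS1, Finset.mem_filter, Finset.mem_univ, true_and] at hp ⊢
        exact ⟨Fin.lt_def.mpr hp.1, by simp [hp.2]⟩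
      · intro p hp
        simp only [hS1, Finset.mem_filter, Finset.mem_univ, true_and] at hp ⊢
        refine ⟨?_, hp.2⟩
        simpa using Fin.lt_def.mp hp.1
      · intro p _; simp
      · intro p _; simp
    rw [heq]; exact hmedian π.symm
  -- the exceptional set predicate
  set E : Fin N × Fin N → Prop := fun p =>
    ((p.1 : ℕ) = i ∧ (j : ℕ) ≤ p.2 ∧ (p.2 : ℕ) < i) ∨
    ((p.2 : ℕ) = i ∧ (j : ℕ) ≤ p.1 ∧ (p.1 : ℕ) < i) with hE
  -- outside E the orders agree
  have hkey : ∀ a b : Fin N, (a : ℕ) ≠ b → ¬ E (a, b) → ((π a : ℕ) < π b ↔ (a : ℕ) < b) := by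
    intro a b hab hEab
    rw [hval, hval]
    simp only [hE, not_or, not_and, not_lt, not_le] at hEab
    obtain ⟨h1, h2⟩ := hEab
    split_ifs <;> omega
  have hsame : S1.filter (fun p => ¬ E p) = S2.filter (fun p => ¬ E p) := by
    ext p
    simp only [hS1, hS2, Finset.filter_filter, Finset.mem_filter, Finset.mem_univ, true_and]
    constructor
    · rintro ⟨⟨h1, h2⟩, h3⟩
      have := hkey p.1 p.2 (fun h => hne _ _ h2 (Fin.ext h)) h3
      exact ⟨⟨Fin.lt_def.mpr (this.mp h1), h2⟩, h3⟩
    · rintro ⟨⟨h1, h2⟩, h3⟩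
      have := hkey p.1 p.2 (fun h => hne _ _ h2 (Fin.ext h)) h3
      exact ⟨⟨this.mpr (Fin.lt_def.mp h1), h2⟩, h3⟩
  -- the two exceptional parts
  set Cin : Finset (Fin N) :=
    Finset.univ.filter (fun m : Fin N => j ≤ m ∧ m < i ∧ T m i) with hCin
  set Cout : Finset (Fin N) :=
    Finset.univ.filter (fun m : Fin N => j ≤ m ∧ m < i ∧ T i m) with hCout
  have hE1 : S1.filter E = Cout.map ⟨fun m => (i, m), fun a b h => by
      simpa [Prod.ext_iff] using h⟩ := by
    ext p
    simp only [hS1, hCout, Finset.filter_filter, Finset.mem_filter, Finset.mem_univ, true_and,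
      Finset.mem_map, Function.Embedding.coeFn_mk]
    constructor
    · rintro ⟨⟨h1, h2⟩, h3⟩
      rcases h3 with ⟨ha, hb1, hb2⟩ | ⟨hb, ha1, ha2⟩
      · have ha' : p.1 = i := Fin.ext ha
        exact ⟨p.2, ⟨Fin.le_def.mpr hb1, Fin.lt_def.mpr hb2, ha' ▸ h2⟩, by
          rw [← ha']; rfl⟩
      · exfalso
        have hb' : (p.2 : ℕ) = i := hb
        rw [hval, hval] at h1
        simp only [hb'] at h1
        split_ifs at h1 <;> omega
    · rintro ⟨m, ⟨hm1, hm2, hm3⟩, rfl⟩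
      have hm1' : (j : ℕ) ≤ m := hm1
      have hm2' : (m : ℕ) < i := hm2
      refine ⟨⟨?_, hm3⟩, Or.inl ⟨rfl, hm1', hm2'⟩⟩
      show ((π i : Fin N) : ℕ) < (π m : ℕ)
      rw [hval, hval]
      split_ifs <;> omega
  have hE2 : S2.filter E = Cin.map ⟨fun m => (m, i), fun a b h => by
      simpa [Prod.ext_iff] using h⟩ := by
    ext p
    simp only [hS2, hCin, Finset.filter_filter, Finset.mem_filter, Finset.mem_univ, true_and,
      Finset.mem_map, Function.Embedding.coeFn_mk]
    constructor
    · rintro ⟨⟨h1, h2⟩, h3⟩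
      have h1' : (p.1 : ℕ) < p.2 := h1
      rcases h3 with ⟨ha, hb1, hb2⟩ | ⟨hb, ha1, ha2⟩
      · exfalso; omega
      · have hb' : p.2 = i := Fin.ext hb
        exact ⟨p.1, ⟨Fin.le_def.mpr ha1, Fin.lt_def.mpr ha2, hb' ▸ h2⟩, by rw [← hb']; rfl⟩
    · rintro ⟨m, ⟨hm1, hm2, hm3⟩, rfl⟩
      have hm1' : (j : ℕ) ≤ m := hm1
      have hm2' : (m : ℕ) < i := hm2
      exact ⟨⟨hm2, hm3⟩, Or.inr ⟨rfl, hm1', hm2'⟩⟩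
  -- combine to get Cout.card ≤ Cin.card
  have hsplit1 : (S1.filter E).card + (S1.filter (fun p => ¬ E p)).card = S1.card :=
    Finset.card_filter_add_card_filter_not E
  have hsplit2 : (S2.filter E).card + (S2.filter (fun p => ¬ E p)).card = S2.card :=
    Finset.card_filter_add_card_filter_not E
  have hCoutCin : Cout.card ≤ Cin.card := by
    have := hcard1
    rw [← hsplit1, ← hsplit2, hsame, hE1, hE2, Finset.card_map, Finset.card_map] at this
    omega
  -- partition the block
  set D : Finset (Fin N) := Finset.univ.filter (fun m : Fin N => j ≤ m ∧ m < i) with hD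
  have hDcard : D.card = (i : ℕ) - j := by
    have : D = Finset.Ico j i := by
      ext m; simp [hD, Finset.mem_Ico]
    rw [this, Fin.card_Ico]
  have hDsplit : Cin.card + Cout.card = D.card := by
    have h1 : Cin = D.filter (fun m => T m i) := by
      ext m; simp only [hCin, hD, Finset.filter_filter, Finset.mem_filter, Finset.mem_univ,
        true_and]; tauto
    have h2 : Cout = D.filter (fun m => ¬ T m i) := by
      ext m
      simp only [hCout, hD, Finset.filter_filter, Finset.mem_filter, Finset.mem_univ, true_and]
      constructor
      · rintro ⟨hm1, hm2, hm3⟩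
        exact ⟨⟨hm1, hm2⟩, (htour i m (fun h => absurd hm2 (by simp [← h]))).mp hm3⟩
      · rintro ⟨⟨hm1, hm2⟩, hm3⟩
        exact ⟨hm1, hm2, (htour i m (fun h => absurd hm2 (by simp [← h]))).mpr hm3⟩
    rw [h1, h2]
    exact Finset.card_filter_add_card_filter_not _
  omega
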